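/- Let a < b be real numbers and let f : [a,b] → ℝ be absolutely continuous on [a,b] with f' ∈ L²[a,b]. Set σ(f') = ‖f'‖₂² − (f(b) − f(a))²/(b − a). Then |f((a+b)/2) − (1/(b−a)) ∫_a^b f(t) dt| ≤ ((b−a)^{1/2}/(2√3)) · √(σ(f')). -/

import Mathlib

open MeasureTheory Set


lemma fubini_primitive' (a b : ℝ) (hab : a ≤ b) (g : ℝ → ℝ)
    (hg : IntegrableOn g (Set.Ioc a b) volume) :
    ∫ t in a..b, (∫ s in a..t, g s) = ∫ s in a..b, (b - s) * g s := by
  set μ := volume.restrict (Set.Ioc a b) with hμ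
  have hgi : Integrable g μ := hg
  set F : ℝ → ℝ → ℝ := fun t s => Set.indicator (Set.Ioc a t) g s with hF
  have hF_eq : Function.uncurry F =
      Set.indicator {p : ℝ × ℝ | a < p.2 ∧ p.2 ≤ p.1} (fun p => g p.2) := by
    funext p
    simp [Function.uncurry, F, Set.indicator_apply, Set.mem_Ioc]
  have hSmeas : MeasurableSet {p : ℝ × ℝ | a < p.2 ∧ p.2 ≤ p.1} :=
    (measurableSet_lt measurable_const measurable_snd).inter
      (measurableSet_le measurable_snd measurable_fst)
  have hFmeas : AEStronglyMeasurable (Function.uncurry F) (μ.prod μ) := by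
    rw [hF_eq]
    exact (hgi.aestronglyMeasurable.comp_snd).indicator hSmeas
  have hFx : ∀ x : ℝ, Integrable (fun s => F x s) μ :=
    fun x => hgi.indicator measurableSet_Ioc
  have hnorm : ∀ x, (fun s => ‖F x s‖) = Set.indicator (Set.Ioc a x) (fun s => ‖g s‖) := by
    intro x; funext s
    exact norm_indicator_eq_indicator_norm g s
  have hnormint : ∀ x, Integrable (Set.indicator (Set.Ioc a x) fun s => ‖g s‖) μ :=
    fun x => hgi.norm.indicator measurableSet_Ioc
  have hφmono : Monotone (fun x => ∫ s, ‖F x s‖ ∂μ) := by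
    intro x y hxy
    simp only [hnorm]
    exact integral_mono (hnormint x) (hnormint y)
      (Set.indicator_le_indicator_of_subset (Set.Ioc_subset_Ioc_right hxy)
        (fun s => norm_nonneg _))
  have hφint : Integrable (fun x => ∫ s, ‖F x s‖ ∂μ) μ := by
    refine Integrable.mono' (integrable_const (∫ s, ‖g s‖ ∂μ))
      (hφmono.measurable.aestronglyMeasurable) ?_
    refine Filter.Eventually.of_forall fun x => ?_
    rw [Real.norm_of_nonneg (integral_nonneg fun s => norm_nonneg _)]
    simp only [hnorm]
    exact integral_mono (hnormint x) hgi.norm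
      (Set.indicator_le_self' fun s _ => norm_nonneg _)
  have hFint : Integrable (Function.uncurry F) (μ.prod μ) :=
    (integrable_prod_iff hFmeas).2
      ⟨Filter.Eventually.of_forall hFx, hφint⟩
  have hswap : ∫ t, (∫ s, F t s ∂μ) ∂μ = ∫ s, (∫ t, F t s ∂μ) ∂μ :=
    integral_integral_swap hFint
  have hleft : ∫ t in a..b, (∫ s in a..t, g s) = ∫ t, (∫ s, F t s ∂μ) ∂μ := by
    rw [intervalIntegral.integral_of_le hab]
    refine setIntegral_congr_fun measurableSet_Ioc fun t ht => ?_
    rw [intervalIntegral.integral_of_le ht.1.le]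
    rw [hμ]
    rw [integral_indicator measurableSet_Ioc, Measure.restrict_restrict measurableSet_Ioc,
      Set.inter_eq_left.mpr (Set.Ioc_subset_Ioc_right ht.2)]
  have hright : ∫ s, (∫ t, F t s ∂μ) ∂μ = ∫ s in a..b, (b - s) * g s := by
    rw [intervalIntegral.integral_of_le hab]
    refine setIntegral_congr_fun measurableSet_Ioc fun s hs => ?_
    have h1 : (fun t => F t s) = Set.indicator (Set.Ici s) (fun _ => g s) := by
      funext t
      simp only [F, Set.indicator_apply, Set.mem_Ioc, Set.mem_Ici]
      by_cases h : s ≤ t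
      · simp [h, hs.1]
      · simp [h]
    rw [h1, integral_indicator_const _ measurableSet_Ici, hμ, measureReal_def,
      Measure.restrict_apply measurableSet_Ici]
    have h2 : Set.Ici s ∩ Set.Ioc a b = Set.Icc s b := by
      ext t
      simp only [Set.mem_inter_iff, Set.mem_Ici, Set.mem_Ioc, Set.mem_Icc]
      exact ⟨fun ⟨h1, _, h3⟩ => ⟨h1, h3⟩, fun ⟨h1, h2⟩ => ⟨h1, lt_of_lt_of_le hs.1 h1, h2⟩⟩
    rw [h2, Real.volume_Icc, ENNReal.toReal_ofReal (by linarith [hs.2] : (0:ℝ) ≤ b - s)]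
    simp [smul_eq_mul]
  rw [hleft, hswap, hright]


lemma cs_integral' {μ : Measure ℝ} (K v : ℝ → ℝ)
    (hK2 : Integrable (fun t => K t ^ 2) μ)
    (hv2 : Integrable (fun t => v t ^ 2) μ)
    (hKv : Integrable (fun t => K t * v t) μ) :
    (∫ t, K t * v t ∂μ) ^ 2 ≤ (∫ t, K t ^ 2 ∂μ) * (∫ t, v t ^ 2 ∂μ) := by
  set A := ∫ t, K t ^ 2 ∂μ with hA
  set B := ∫ t, K t * v t ∂μ with hB
  set C := ∫ t, v t ^ 2 ∂μ with hC
  have key : ∀ lam : ℝ, 0 ≤ C * (lam * lam) + (-2 * B) * lam + A := by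
    intro lam
    have i1 : Integrable (fun t => v t ^ 2 * (lam * lam)) μ := hv2.mul_const _
    have i2 : Integrable (fun t => -2 * (K t * v t) * lam) μ :=
      (hKv.const_mul (-2)).mul_const lam
    have h1 : ∀ t, (K t - lam * v t) ^ 2
        = v t ^ 2 * (lam * lam) + -2 * (K t * v t) * lam + K t ^ 2 := by
      intro t; ring
    have h3 : (0:ℝ) ≤ ∫ t, (K t - lam * v t) ^ 2 ∂μ :=
      integral_nonneg fun t => sq_nonneg _
    have e : ∫ t, (K t - lam * v t) ^ 2 ∂μ = C * (lam * lam) + (-2 * B) * lam + A := by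
      simp only [h1]
      have ea : ∫ t, (v t ^ 2 * (lam * lam) + -2 * (K t * v t) * lam + K t ^ 2) ∂μ
          = (∫ t, (v t ^ 2 * (lam * lam) + -2 * (K t * v t) * lam) ∂μ)
            + ∫ t, K t ^ 2 ∂μ := integral_add (i1.add i2) hK2
      have eb : ∫ t, (v t ^ 2 * (lam * lam) + -2 * (K t * v t) * lam) ∂μ
          = (∫ t, v t ^ 2 * (lam * lam) ∂μ) + ∫ t, -2 * (K t * v t) * lam ∂μ :=
        integral_add i1 i2
      rw [ea, eb, integral_mul_const, integral_mul_const, integral_const_mul]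
    linarith [e ▸ h3]
  have hd : discrim C (-2 * B) A ≤ 0 := discrim_le_zero key
  rw [discrim] at hd
  nlinarith [hd]

/-- **Sharp midpoint inequality for `f' ∈ L²[a,b]`** (Corollary of Theorem 2.3, inequality
(2.36)): with `σ(f') = ∫_a^b f'(t)² dt - (f b - f a)²/(b - a)`,
`|f((a+b)/2) - (1/(b-a)) ∫_a^b f| ≤ (√(b-a)/(2√3)) √(σ(f'))`. -/
theorem companion_ostrowski_first_deriv_L2_midpoint
    (a b : ℝ) (hab : a < b) (f f' : ℝ → ℝ)
    (hcont : ContinuousOn f (Set.Icc a b))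
    (hint : IntervalIntegrable f' MeasureTheory.volume a b)
    (hftc : ∀ x ∈ Set.Icc a b, f x - f a = ∫ t in a..x, f' t)
    (hL2 : IntervalIntegrable (fun t => (f' t) ^ 2) MeasureTheory.volume a b)
    (σ : ℝ) (hσ : σ = (∫ t in a..b, (f' t) ^ 2) - (f b - f a) ^ 2 / (b - a)) :
    |f ((a + b) / 2) - (1 / (b - a)) * ∫ t in a..b, f t|
      ≤ Real.sqrt (b - a) / (2 * Real.sqrt 3) * Real.sqrt σ := by
  have hab' : a ≤ b := hab.le
  have hba : (0:ℝ) < b - a := by linarith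
  set m : ℝ := (a + b) / 2 with hm
  have ham : a ≤ m := by rw [hm]; linarith
  have hmb : m ≤ b := by rw [hm]; linarith
  have hmem : m ∈ Set.Icc a b := ⟨ham, hmb⟩
  set c : ℝ := (f b - f a) / (b - a) with hc
  set K : ℝ → ℝ := fun t => if t ≤ m then t - a else t - b with hKdef
  set v : ℝ → ℝ := fun t => f' t - c with hvdef
  -- subinterval integrability of f'
  have hsub1 : Set.uIcc a m ⊆ Set.uIcc a b := by
    rw [Set.uIcc_of_le hab', Set.uIcc_of_le ham]; exact Set.Icc_subset_Icc le_rfl hmb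
  have hsub2 : Set.uIcc m b ⊆ Set.uIcc a b := by
    rw [Set.uIcc_of_le hab', Set.uIcc_of_le hmb]; exact Set.Icc_subset_Icc ham le_rfl
  have hf'am : IntervalIntegrable f' volume a m := hint.mono_set hsub1
  have hf'mb : IntervalIntegrable f' volume m b := hint.mono_set hsub2
  -- continuous multipliers
  have hcta : ∀ u w : ℝ, ContinuousOn (fun t : ℝ => t - a) (Set.uIcc u w) :=
    fun u w => (continuous_id.sub continuous_const).continuousOn
  have hctb : ∀ u w : ℝ, ContinuousOn (fun t : ℝ => t - b) (Set.uIcc u w) :=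
    fun u w => (continuous_id.sub continuous_const).continuousOn
  have hbs1 : IntervalIntegrable (fun s => (b - s) * f' s) volume a m :=
    hf'am.continuousOn_mul (continuous_const.sub continuous_id).continuousOn
  have hbs2 : IntervalIntegrable (fun s => (b - s) * f' s) volume m b :=
    hf'mb.continuousOn_mul (continuous_const.sub continuous_id).continuousOn
  have hta_f' : IntervalIntegrable (fun t => (t - a) * f' t) volume a m :=
    hf'am.continuousOn_mul (hcta a m)
  have htb_f' : IntervalIntegrable (fun t => (t - b) * f' t) volume m b :=
    hf'mb.continuousOn_mul (hctb m b)
  -- pointwise description of K on the two halves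
  have hK1 : ∀ t ∈ Set.Ioc a m, K t = t - a := by
    intro t ht; rw [hKdef]; exact if_pos ht.2
  have hK2' : ∀ t ∈ Set.Ioc m b, K t = t - b := by
    intro t ht; rw [hKdef]; exact if_neg (not_le.mpr ht.1)
  have hK1' : ∀ t ∈ Set.uIcc a m, K t = t - a := by
    intro t ht; rw [Set.uIcc_of_le ham] at ht; rw [hKdef]; exact if_pos ht.2
  -- interval integrability of K and friends
  have ae1 : ∀ {g h : ℝ → ℝ}, (∀ t ∈ Set.Ioc a m, g t = h t) →
      g =ᵐ[volume.restrict (Set.uIoc a m)] h := by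
    intro g h hgh
    rw [Set.uIoc_of_le ham]
    filter_upwards [ae_restrict_mem measurableSet_Ioc] with t ht using hgh t ht
  have ae2 : ∀ {g h : ℝ → ℝ}, (∀ t ∈ Set.Ioc m b, g t = h t) →
      g =ᵐ[volume.restrict (Set.uIoc m b)] h := by
    intro g h hgh
    rw [Set.uIoc_of_le hmb]
    filter_upwards [ae_restrict_mem measurableSet_Ioc] with t ht using hgh t ht
  have hK_am : IntervalIntegrable K volume a m :=
    ((((continuous_sub_right a)).intervalIntegrable a m).congr_ae
      (ae1 fun t ht => (hK1 t ht).symm))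
  have hK_mb : IntervalIntegrable K volume m b :=
    ((((continuous_sub_right b)).intervalIntegrable m b).congr_ae
      (ae2 fun t ht => (hK2' t ht).symm))
  have hK_ab : IntervalIntegrable K volume a b := hK_am.trans hK_mb
  have hK2_am : IntervalIntegrable (fun t => K t ^ 2) volume a m :=
    (((((continuous_sub_right a)).pow 2).intervalIntegrable a m).congr_ae
      (ae1 fun t ht => by rw [hK1 t ht]; rfl))
  have hK2_mb : IntervalIntegrable (fun t => K t ^ 2) volume m b :=
    (((((continuous_sub_right b)).pow 2).intervalIntegrable m b).congr_ae
      (ae2 fun t ht => by rw [hK2' t ht]; rfl))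
  have hK2_ab : IntervalIntegrable (fun t => K t ^ 2) volume a b := hK2_am.trans hK2_mb
  have hKf'_am : IntervalIntegrable (fun t => K t * f' t) volume a m :=
    hta_f'.congr_ae (ae1 fun t ht => by rw [hK1 t ht])
  have hKf'_mb : IntervalIntegrable (fun t => K t * f' t) volume m b :=
    htb_f'.congr_ae (ae2 fun t ht => by rw [hK2' t ht])
  have hKf'_ab : IntervalIntegrable (fun t => K t * f' t) volume a b :=
    hKf'_am.trans hKf'_mb
  have hKv_ab : IntervalIntegrable (fun t => K t * v t) volume a b :=
    (hKf'_ab.sub (hK_ab.const_mul c)).congr_ae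
      (Filter.Eventually.of_forall fun t => by rw [hvdef]; ring)
  have hv2_ab : IntervalIntegrable (fun t => v t ^ 2) volume a b :=
    (((hL2.sub (hint.const_mul (2 * c))).add (intervalIntegrable_const (c := c ^ 2))).congr_ae
      (Filter.Eventually.of_forall fun t => by rw [hvdef]; ring))
  -- ∫ K = 0
  have s1 : ∫ t in a..m, K t = ((m - a) ^ 2 - 0 ^ 2) / 2 := by
    rw [intervalIntegral.integral_congr (g := fun t => t - a) (fun t ht => hK1' t ht)]
    rw [show (fun t : ℝ => t - a) = (fun t : ℝ => (fun x : ℝ => x) (t - a)) from rfl,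
      intervalIntegral.integral_comp_sub_right (fun x : ℝ => x) a, sub_self, integral_id]
  have s2 : ∫ t in m..b, K t = (0 ^ 2 - (m - b) ^ 2) / 2 := by
    have e : ∫ t in m..b, K t = ∫ t in m..b, (t - b) := by
      rw [intervalIntegral.integral_of_le hmb, intervalIntegral.integral_of_le hmb]
      exact setIntegral_congr_fun measurableSet_Ioc fun t ht => hK2' t ht
    rw [e, show (fun t : ℝ => t - b) = (fun t : ℝ => (fun x : ℝ => x) (t - b)) from rfl,
      intervalIntegral.integral_comp_sub_right (fun x : ℝ => x) b, sub_self, integral_id]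
  have hIK : ∫ t in a..b, K t = 0 := by
    rw [← intervalIntegral.integral_add_adjacent_intervals hK_am hK_mb, s1, s2, hm]; ring
  -- ∫ K² = (b-a)³/12
  have s3 : ∫ t in a..m, K t ^ 2 = ((m - a) ^ 3 - 0 ^ 3) / 3 := by
    rw [intervalIntegral.integral_congr (g := fun t => (t - a) ^ 2)
      (fun t ht => by rw [hK1' t ht])]
    rw [show (fun t : ℝ => (t - a) ^ 2) = (fun t : ℝ => (fun x : ℝ => x ^ 2) (t - a)) from rfl,
      intervalIntegral.integral_comp_sub_right (fun x : ℝ => x ^ 2) a, sub_self, integral_pow]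
    norm_num
  have s4 : ∫ t in m..b, K t ^ 2 = (0 ^ 3 - (m - b) ^ 3) / 3 := by
    have e : ∫ t in m..b, K t ^ 2 = ∫ t in m..b, (t - b) ^ 2 := by
      rw [intervalIntegral.integral_of_le hmb, intervalIntegral.integral_of_le hmb]
      exact setIntegral_congr_fun measurableSet_Ioc fun t ht => by rw [hK2' t ht]
    rw [e, show (fun t : ℝ => (t - b) ^ 2) = (fun t : ℝ => (fun x : ℝ => x ^ 2) (t - b)) from rfl,
      intervalIntegral.integral_comp_sub_right (fun x : ℝ => x ^ 2) b, sub_self, integral_pow]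
    norm_num
  have hIK2 : ∫ t in a..b, K t ^ 2 = (b - a) ^ 3 / 12 := by
    rw [← intervalIntegral.integral_add_adjacent_intervals hK2_am hK2_mb, s3, s4, hm]; ring
  -- the key identity ∫ K f' = (b-a) f(m) - ∫ f
  have hcont' : ContinuousOn f (Set.uIcc a b) := by rwa [Set.uIcc_of_le hab']
  have hfint : IntervalIntegrable f volume a b := hcont'.intervalIntegrable
  have hprim_int : IntervalIntegrable (fun x => ∫ t in a..x, f' t) volume a b :=
    (intervalIntegral.continuousOn_primitive_interval
      (by rw [Set.uIcc_of_le hab']; exact (integrableOn_Icc_iff_integrableOn_Ioc).mpr hint.1)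
      ).intervalIntegrable
  have hJ : ∫ t in a..b, (∫ s in a..t, f' s) = ∫ s in a..b, (b - s) * f' s :=
    fubini_primitive' a b hab' f' hint.1
  have step2 : ∫ t in a..b, (f m - f t) =
      ∫ t in a..b, ((∫ s in a..m, f' s) - ∫ s in a..t, f' s) := by
    refine intervalIntegral.integral_congr fun t ht => ?_
    rw [Set.uIcc_of_le hab'] at ht
    have h1 := hftc m hmem
    have h2 := hftc t ht
    linarith [h1, h2]
  have step1 : ∫ t in a..b, (f m - f t) = (b - a) * f m - ∫ t in a..b, f t := by
    rw [intervalIntegral.integral_sub intervalIntegrable_const hfint,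
      intervalIntegral.integral_const, smul_eq_mul]
  have step3 : ∫ t in a..b, ((∫ s in a..m, f' s) - ∫ s in a..t, f' s)
      = (b - a) * (∫ s in a..m, f' s) - ∫ s in a..b, (b - s) * f' s := by
    rw [intervalIntegral.integral_sub intervalIntegrable_const hprim_int,
      intervalIntegral.integral_const, smul_eq_mul, hJ]
  have eqA : (b - a) * f m - ∫ t in a..b, f t
      = (b - a) * (∫ s in a..m, f' s) - ∫ s in a..b, (b - s) * f' s := by
    rw [← step1, step2, step3]
  -- split ∫ K f'
  have p1 : ∫ t in a..m, K t * f' t = ∫ t in a..m, (t - a) * f' t :=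
    intervalIntegral.integral_congr fun t ht => by rw [hK1' t ht]
  have p2 : ∫ t in m..b, K t * f' t = ∫ t in m..b, (t - b) * f' t := by
    rw [intervalIntegral.integral_of_le hmb, intervalIntegral.integral_of_le hmb]
    exact setIntegral_congr_fun measurableSet_Ioc fun t ht => by rw [hK2' t ht]
  have q1 : ∫ t in a..m, (t - a) * f' t
      = (b - a) * (∫ s in a..m, f' s) - ∫ s in a..m, (b - s) * f' s := by
    rw [← intervalIntegral.integral_const_mul,
      ← intervalIntegral.integral_sub (hf'am.const_mul (b - a)) hbs1]
    exact intervalIntegral.integral_congr fun t ht => by ring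
  have q2 : ∫ t in m..b, (t - b) * f' t = - ∫ s in m..b, (b - s) * f' s := by
    rw [← intervalIntegral.integral_neg]
    exact intervalIntegral.integral_congr fun t ht => by ring
  have hsplit : ∫ s in a..b, (b - s) * f' s
      = (∫ s in a..m, (b - s) * f' s) + ∫ s in m..b, (b - s) * f' s :=
    (intervalIntegral.integral_add_adjacent_intervals hbs1 hbs2).symm
  have hIKf' : ∫ t in a..b, K t * f' t = (b - a) * f m - ∫ t in a..b, f t := by
    rw [← intervalIntegral.integral_add_adjacent_intervals hKf'_am hKf'_mb, p1, p2, eqA,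
      hsplit, q1, q2]
    ring
  -- ∫ K v = ∫ K f'
  have hIKv : ∫ t in a..b, K t * v t = (b - a) * f m - ∫ t in a..b, f t := by
    have e : ∫ t in a..b, K t * v t = ∫ t in a..b, (K t * f' t - c * K t) :=
      intervalIntegral.integral_congr fun t _ => by rw [hvdef]; ring
    rw [e, intervalIntegral.integral_sub hKf'_ab (hK_ab.const_mul c),
      intervalIntegral.integral_const_mul, hIK, mul_zero, sub_zero, hIKf']
  -- ∫ v² = σ
  have hf'tot : ∫ t in a..b, f' t = f b - f a := (hftc b (right_mem_Icc.mpr hab')).symm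
  have hIv2 : ∫ t in a..b, v t ^ 2 = σ := by
    have e : ∫ t in a..b, v t ^ 2
        = ∫ t in a..b, (f' t ^ 2 - 2 * c * f' t + c ^ 2) :=
      intervalIntegral.integral_congr fun t _ => by rw [hvdef]; ring
    rw [e, intervalIntegral.integral_add (hL2.sub (hint.const_mul (2 * c)))
        (intervalIntegrable_const (c := c ^ 2)),
      intervalIntegral.integral_sub hL2 (hint.const_mul (2 * c)),
      intervalIntegral.integral_const_mul, intervalIntegral.integral_const, smul_eq_mul,
      hf'tot, hσ, hc]
    field_simp
    ring
  -- Cauchy–Schwarz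
  have hcs : (∫ t in a..b, K t * v t) ^ 2
      ≤ (∫ t in a..b, K t ^ 2) * ∫ t in a..b, v t ^ 2 := by
    rw [intervalIntegral.integral_of_le hab', intervalIntegral.integral_of_le hab',
      intervalIntegral.integral_of_le hab']
    exact cs_integral' K v
      ((intervalIntegrable_iff_integrableOn_Ioc_of_le hab').mp hK2_ab)
      ((intervalIntegrable_iff_integrableOn_Ioc_of_le hab').mp hv2_ab)
      ((intervalIntegrable_iff_integrableOn_Ioc_of_le hab').mp hKv_ab)
  have hcs2 : (∫ t in a..b, K t * v t) ^ 2 ≤ (b - a) ^ 3 / 12 * σ := by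
    rw [← hIK2, ← hIv2]; exact hcs
  have hσ0 : 0 ≤ σ := by
    have h1 : (0:ℝ) ≤ (b - a) ^ 3 / 12 * σ := le_trans (sq_nonneg _) hcs2
    have hpos : (0:ℝ) < (b - a) ^ 3 / 12 := by positivity
    exact nonneg_of_mul_nonneg_right h1 hpos
  have habs : |∫ t in a..b, K t * v t| ≤ Real.sqrt ((b - a) ^ 3 / 12) * Real.sqrt σ := by
    rw [← Real.sqrt_sq_eq_abs, ← Real.sqrt_mul (by positivity : (0:ℝ) ≤ (b - a) ^ 3 / 12)]
    exact Real.sqrt_le_sqrt hcs2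
  -- final assembly
  have key : f m - 1 / (b - a) * ∫ t in a..b, f t = (∫ t in a..b, K t * v t) / (b - a) := by
    rw [hIKv]; field_simp
  have hsqrt12 : Real.sqrt 12 = 2 * Real.sqrt 3 := by
    rw [show (12:ℝ) = 2 ^ 2 * 3 by norm_num, Real.sqrt_mul (by positivity),
      Real.sqrt_sq (by norm_num : (0:ℝ) ≤ 2)]
  have hsqrtK : Real.sqrt ((b - a) ^ 3 / 12)
      = (b - a) * Real.sqrt (b - a) / (2 * Real.sqrt 3) := by
    rw [show ((b - a) ^ 3 / 12 : ℝ) = (b - a) ^ 2 * ((b - a) / 12) by ring,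
      Real.sqrt_mul (by positivity), Real.sqrt_sq hba.le,
      Real.sqrt_div hba.le, hsqrt12]
    ring
  calc |f m - 1 / (b - a) * ∫ t in a..b, f t|
      = |∫ t in a..b, K t * v t| / (b - a) := by rw [key, abs_div, abs_of_pos hba]
    _ ≤ (Real.sqrt ((b - a) ^ 3 / 12) * Real.sqrt σ) / (b - a) :=
        by gcongr
    _ = Real.sqrt (b - a) / (2 * Real.sqrt 3) * Real.sqrt σ := by
        rw [hsqrtK]; field_simp
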